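/- For any bounded meet-semilattice A, the space of proper nonempty filters of A, topologized by the subbasis consisting of the sets θ(a) = {x : a ∈ x} and their complements for a ∈ A, is compact. -/

import Mathlib

/-- A filter of a meet-semilattice: an upward-closed subset closed under binary
meets. -/
def IsFilt {X : Type*} [SemilatticeInf X] (s : Set X) : Prop :=
  (∀ x y : X, x ∈ s → x ≤ y → y ∈ s) ∧ ∀ x y : X, x ∈ s → y ∈ s → x ⊓ y ∈ s

variable (A : Type*) [SemilatticeInf A] [BoundedOrder A]

/-- The points of the dual space of a bounded meet-semilattice `A`: the proper
nonempty filters of `A`. -/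
def Pt : Type _ := {x : Set A // IsFilt x ∧ x.Nonempty ∧ ⊥ ∉ x}

/-- The basic sets `θ a = {x : a ∈ x}`. -/
def theta (a : A) : Set (Pt A) := {x : Pt A | a ∈ x.1}

/-- The Stone-type topology on the space of proper nonempty filters of `A`,
generated by the subbasis of the sets `θ a` and their complements. -/
def ptTop : TopologicalSpace (Pt A) :=
  TopologicalSpace.generateFrom
    ({s | ∃ a : A, s = theta A a} ∪ {s | ∃ a : A, s = (theta A a)ᶜ})

lemma theta_top : theta A ⊤ = Set.univ := by
  ext x
  simp only [theta, Set.mem_setOf_eq, Set.mem_univ, iff_true]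
  obtain ⟨hf, ⟨a, ha⟩, _⟩ := x.2
  exact hf.1 a ⊤ ha le_top

lemma theta_bot : theta A ⊥ = ∅ := by
  ext x
  simp only [theta, Set.mem_setOf_eq, Set.mem_empty_iff_false, iff_false]
  exact x.2.2.2

lemma theta_inf (a b : A) : theta A (a ⊓ b) = theta A a ∩ theta A b := by
  ext x
  obtain ⟨hup, hinf⟩ := x.2.1
  constructor
  · intro h
    exact ⟨hup _ _ h inf_le_left, hup _ _ h inf_le_right⟩
  · exact fun ⟨h1, h2⟩ => hinf _ _ h1 h2

/-- The space of proper nonempty filters of a bounded meet-semilattice,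
with the topology generated by the sets `θ a` and their complements,
is compact. -/
theorem pt_space_compact : @CompactSpace (Pt A) (ptTop A) := by
  letI : TopologicalSpace (Pt A) := ptTop A
  constructor
  rw [isCompact_iff_ultrafilter_le_nhds]
  intro F _
  -- candidate limit point
  set xs : Set A := {a | theta A a ∈ F} with hxs
  have hx : IsFilt xs ∧ xs.Nonempty ∧ ⊥ ∉ xs := by
    refine ⟨⟨fun a b ha hab => ?_, fun a b ha hb => ?_⟩, ⟨⊤, ?_⟩, ?_⟩
    · exact F.toFilter.mem_of_superset ha
        (fun x hx => x.2.1.1 _ _ hx hab)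
    · rw [hxs, Set.mem_setOf_eq, theta_inf]
      exact F.toFilter.inter_mem ha hb
    · show theta A ⊤ ∈ F
      rw [theta_top]; exact Filter.univ_mem
    · show theta A ⊥ ∉ F
      rw [theta_bot]; exact F.toFilter.empty_notMem
  refine ⟨(⟨xs, hx⟩ : Pt A), Set.mem_univ _, ?_⟩
  erw [ptTop, TopologicalSpace.nhds_generateFrom]
  simp only [le_iInf_iff, Filter.le_principal_iff]
  rintro s ⟨hmem, hs | hs⟩
  · obtain ⟨a, rfl⟩ := hs
    exact hmem
  · obtain ⟨a, rfl⟩ := hs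
    exact (F.compl_mem_iff_notMem).mpr hmem
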